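/- Let m1,m2,n1,n2 ≥ 0 with min(m2,n2) > 0. Define ²S(m1,m2,n1,n2) as the union of {(b,0,d) ∈ Z_+^3 : d ≤ min(m2,n2), b+d ≤ min(m1+m2,n1+n2), b ≤ m1+n1, 2d+b ≤ m2+n2} and {(b,c,0) ∈ Z_+^3 : c ≥ 1, b+c ≤ min(m1+m2,n1+n2), b ≤ m2+n2, b+2c ≤ m1+n1}. Then |²S(m1,m2,n1,n2)| = |²S(m1,m2−1,n1,n2−1)| + min(2(m1+m2), 2(n1+n2), m1+n1) + 1. -/
import Mathlib


/-- The reduced lattice set ²S^C of the type C2 fusion polytope. -/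
def S2set (m1 m2 n1 n2 : ℤ) : Set (ℤ × ℤ × ℤ) :=
  {p | (p.2.1 = 0 ∧ 0 ≤ p.1 ∧ 0 ≤ p.2.2 ∧ p.2.2 ≤ min m2 n2 ∧
          p.1 + p.2.2 ≤ min (m1 + m2) (n1 + n2) ∧ p.1 ≤ m1 + n1 ∧
          2 * p.2.2 + p.1 ≤ m2 + n2) ∨
       (p.2.2 = 0 ∧ 0 ≤ p.1 ∧ 1 ≤ p.2.1 ∧
          p.1 + p.2.1 ≤ min (m1 + m2) (n1 + n2) ∧ p.1 ≤ m2 + n2 ∧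
          p.1 + 2 * p.2.1 ≤ m1 + n1)}

lemma mem_S2set_iff (m1 m2 n1 n2 a b c : ℤ) :
    ((a, b, c) : ℤ × ℤ × ℤ) ∈ S2set m1 m2 n1 n2 ↔
      ((b = 0 ∧ 0 ≤ a ∧ 0 ≤ c ∧ c ≤ min m2 n2 ∧
          a + c ≤ min (m1 + m2) (n1 + n2) ∧ a ≤ m1 + n1 ∧
          2 * c + a ≤ m2 + n2) ∨
       (c = 0 ∧ 0 ≤ a ∧ 1 ≤ b ∧
          a + b ≤ min (m1 + m2) (n1 + n2) ∧ a ≤ m2 + n2 ∧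
          a + 2 * b ≤ m1 + n1)) := by
  simp only [S2set, Set.mem_setOf_eq]

/-- The shift map used for the recursion. -/
def Tmap (p : ℤ × ℤ × ℤ) : ℤ × ℤ × ℤ :=
  if p.2.1 = 0 then (p.1, p.2.1, p.2.2 + 1) else p

lemma Tmap_mk_zero (a c : ℤ) : Tmap (a, 0, c) = (a, 0, c + 1) := by
  simp [Tmap]

lemma Tmap_mk_ne (a b c : ℤ) (hb : b ≠ 0) : Tmap (a, b, c) = (a, b, c) :=
  if_neg hb

lemma Tmap_inj : Function.Injective Tmap := by
  rintro ⟨a, b, c⟩ ⟨d, e, f⟩ h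
  by_cases hb : b = 0 <;> by_cases he : e = 0
  · subst hb; subst he
    rw [Tmap_mk_zero, Tmap_mk_zero, Prod.mk.injEq, Prod.mk.injEq] at h
    rw [Prod.mk.injEq, Prod.mk.injEq]
    exact ⟨h.1, rfl, by omega⟩
  · subst hb
    rw [Tmap_mk_zero, Tmap_mk_ne _ _ _ he, Prod.mk.injEq, Prod.mk.injEq] at h
    exact absurd h.2.1.symm he
  · subst he
    rw [Tmap_mk_zero, Tmap_mk_ne _ _ _ hb, Prod.mk.injEq, Prod.mk.injEq] at h
    exact absurd h.2.1 hb
  · rw [Tmap_mk_ne _ _ _ hb, Tmap_mk_ne _ _ _ he] at h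
    exact h

lemma mem_image_Tmap (m1 m2 n1 n2 a b c : ℤ) :
    ((a, b, c) : ℤ × ℤ × ℤ) ∈ Tmap '' S2set m1 m2 n1 n2 ↔
      ((b = 0 ∧ ((a, (0:ℤ), c - 1) : ℤ × ℤ × ℤ) ∈ S2set m1 m2 n1 n2) ∨
       (b ≠ 0 ∧ ((a, b, c) : ℤ × ℤ × ℤ) ∈ S2set m1 m2 n1 n2)) := by
  constructor
  · rintro ⟨⟨x, y, z⟩, hq, hT⟩
    by_cases hy : y = 0
    · subst hy
      rw [Tmap_mk_zero] at hT
      rw [Prod.mk.injEq, Prod.mk.injEq] at hT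
      obtain ⟨rfl, rfl, rfl⟩ := hT
      left
      refine ⟨rfl, ?_⟩
      have hz : (z + 1 - 1 : ℤ) = z := by ring
      rw [hz]
      exact hq
    · rw [Tmap_mk_ne _ _ _ hy] at hT
      rw [Prod.mk.injEq, Prod.mk.injEq] at hT
      obtain ⟨rfl, rfl, rfl⟩ := hT
      right
      exact ⟨hy, hq⟩
  · rintro (⟨rfl, hmem⟩ | ⟨h0, hmem⟩)
    · refine ⟨(a, 0, c - 1), hmem, ?_⟩
      rw [Tmap_mk_zero, Prod.mk.injEq, Prod.mk.injEq]
      exact ⟨rfl, rfl, by ring⟩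
    · exact ⟨(a, b, c), hmem, Tmap_mk_ne _ _ _ h0⟩

lemma C_sub (m1 m2 n1 n2 : ℤ) (h : 0 < min m2 n2) (a b c : ℤ)
    (hp : ((a, b, c) : ℤ × ℤ × ℤ) ∈
        S2set m1 m2 n1 n2 \ Tmap '' S2set m1 (m2 - 1) n1 (n2 - 1)) :
    (b = 0 ∧ c = 0 ∧ 0 ≤ a ∧ a ≤ min (m1 + m2) (n1 + n2) ∧
        a ≤ m1 + n1 ∧ a ≤ m2 + n2) ∨
      (c = 0 ∧ 0 ≤ a ∧ 1 ≤ b ∧ a + b ≤ min (m1 + m2) (n1 + n2) ∧ a ≤ m2 + n2 ∧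
        a + 2 * b ≤ m1 + n1 ∧
        (a + b = min (m1 + m2) (n1 + n2) ∨ m2 + n2 - 1 ≤ a)) := by
  obtain ⟨hS, hI⟩ := hp
  rw [mem_S2set_iff] at hS
  rw [mem_image_Tmap] at hI
  rcases hS with hS | hS
  · left
    obtain ⟨hb, hS⟩ := hS
    subst hb
    have hc : c = 0 := by
      by_contra hc
      refine hI (Or.inl ⟨rfl, ?_⟩)
      rw [mem_S2set_iff]
      left
      omega
    omega
  · right
    have hbd : a + b = min (m1 + m2) (n1 + n2) ∨ m2 + n2 - 1 ≤ a := by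
      by_contra hbd
      push_neg at hbd
      refine hI (Or.inr ⟨by omega, ?_⟩)
      rw [mem_S2set_iff]
      right
      omega
    omega

lemma A_mem (m1 m2 n1 n2 : ℤ) (h : 0 < min m2 n2) (a : ℤ) (h1 : 0 ≤ a)
    (h2 : a ≤ min (m1 + m2) (n1 + n2)) (h3 : a ≤ m1 + n1) (h4 : a ≤ m2 + n2) :
    ((a, (0:ℤ), (0:ℤ)) : ℤ × ℤ × ℤ) ∈
      S2set m1 m2 n1 n2 \ Tmap '' S2set m1 (m2 - 1) n1 (n2 - 1) := by
  constructor
  · rw [mem_S2set_iff]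
    left
    omega
  · intro hI
    rw [mem_image_Tmap] at hI
    rcases hI with ⟨_, hmem⟩ | ⟨hb, _⟩
    · rw [mem_S2set_iff] at hmem
      omega
    · exact hb rfl

lemma B_mem (m1 m2 n1 n2 : ℤ) (h : 0 < min m2 n2) (a b : ℤ) (h1 : 0 ≤ a) (h2 : 1 ≤ b)
    (h3 : a + b ≤ min (m1 + m2) (n1 + n2)) (h4 : a ≤ m2 + n2) (h5 : a + 2 * b ≤ m1 + n1)
    (h6 : a + b = min (m1 + m2) (n1 + n2) ∨ m2 + n2 - 1 ≤ a) :
    ((a, b, (0:ℤ)) : ℤ × ℤ × ℤ) ∈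
      S2set m1 m2 n1 n2 \ Tmap '' S2set m1 (m2 - 1) n1 (n2 - 1) := by
  constructor
  · rw [mem_S2set_iff]
    right
    exact ⟨rfl, h1, h2, h3, h4, h5⟩
  · intro hI
    rw [mem_image_Tmap] at hI
    rcases hI with ⟨hb0, _⟩ | ⟨_, hmem⟩
    · omega
    · rw [mem_S2set_iff] at hmem
      omega

lemma S2set_finite (m1 m2 n1 n2 : ℤ) (hm1 : 0 ≤ m1) (hm2 : 0 ≤ m2) (hn1 : 0 ≤ n1)
    (hn2 : 0 ≤ n2) : (S2set m1 m2 n1 n2).Finite := by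
  set R := m1 + m2 + n1 + n2 with hR
  apply Set.Finite.subset
    (((Set.finite_Icc (0:ℤ) R).prod ((Set.finite_Icc (0:ℤ) R).prod (Set.finite_Icc (0:ℤ) R))))
  rintro ⟨a, b, c⟩ hp
  rw [mem_S2set_iff] at hp
  simp only [Set.mem_prod, Set.mem_Icc]
  omega

theorem stmt_11 (m1 m2 n1 n2 : ℤ) (hm1 : 0 ≤ m1) (hn1 : 0 ≤ n1)
    (h : 0 < min m2 n2) :
    ((S2set m1 m2 n1 n2).ncard : ℤ) =
      (S2set m1 (m2 - 1) n1 (n2 - 1)).ncard +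
        min (min (2 * (m1 + m2)) (2 * (n1 + n2))) (m1 + n1) + 1 := by
  have hm2 : 0 < m2 := lt_of_lt_of_le h (min_le_left _ _)
  have hn2 : 0 < n2 := lt_of_lt_of_le h (min_le_right _ _)
  set K := min (min (2 * (m1 + m2)) (2 * (n1 + n2))) (m1 + n1) with hKdef
  have hK : 0 ≤ K := by rw [hKdef]; omega
  have hfinS : (S2set m1 m2 n1 n2).Finite := S2set_finite m1 m2 n1 n2 hm1 hm2.le hn1 hn2.le
  have himS : Tmap '' S2set m1 (m2 - 1) n1 (n2 - 1) ⊆ S2set m1 m2 n1 n2 := by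
    rintro p ⟨⟨x, y, z⟩, hq, rfl⟩
    rw [mem_S2set_iff] at hq
    by_cases hy : y = 0
    · subst hy
      rw [Tmap_mk_zero, mem_S2set_iff]
      omega
    · rw [Tmap_mk_ne _ _ _ hy, mem_S2set_iff]
      omega
  have h1 : ((S2set m1 m2 n1 n2) \ Tmap '' S2set m1 (m2 - 1) n1 (n2 - 1)).ncard +
      (Tmap '' S2set m1 (m2 - 1) n1 (n2 - 1)).ncard = (S2set m1 m2 n1 n2).ncard :=
    Set.ncard_diff_add_ncard_of_subset himS hfinS
  have h2 : (Tmap '' S2set m1 (m2 - 1) n1 (n2 - 1)).ncard =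
      (S2set m1 (m2 - 1) n1 (n2 - 1)).ncard := Set.ncard_image_of_injective _ Tmap_inj
  have h3 : Set.BijOn (fun p : ℤ × ℤ × ℤ => p.1 + 2 * p.2.1)
      ((S2set m1 m2 n1 n2) \ Tmap '' S2set m1 (m2 - 1) n1 (n2 - 1)) (Set.Icc 0 K) := by
    refine ⟨?_, ?_, ?_⟩
    · rintro ⟨a, b, c⟩ hp
      have hp' := hp.1
      rw [mem_S2set_iff] at hp'
      simp only [Set.mem_Icc, hKdef]
      omega
    · rintro ⟨a, b, c⟩ hp ⟨d, e, f⟩ hq hf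
      have hp' := C_sub m1 m2 n1 n2 h a b c hp
      have hq' := C_sub m1 m2 n1 n2 h d e f hq
      have hf' : a + 2 * b = d + 2 * e := hf
      simp only [Prod.mk.injEq]
      omega
    · rintro t ht
      simp only [Set.mem_Icc, hKdef] at ht
      have hM1 : 1 ≤ min (m1 + m2) (n1 + n2) := by omega
      by_cases h1' : t ≤ min (min (m1 + m2) (n1 + n2)) (m2 + n2)
      · exact ⟨(t, 0, 0),
          A_mem m1 m2 n1 n2 h t (by omega) (by omega) (by omega) (by omega),
          by show t + 2 * 0 = t; ring⟩
      · by_cases h2' : max (min (m1 + m2) (n1 + n2) + 1)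
            (2 * min (m1 + m2) (n1 + n2) - (m2 + n2)) ≤ t
        · refine ⟨(2 * min (m1 + m2) (n1 + n2) - t, t - min (m1 + m2) (n1 + n2), 0), ?_,
            by show 2 * min (m1 + m2) (n1 + n2) - t
                + 2 * (t - min (m1 + m2) (n1 + n2)) = t; ring⟩
          exact B_mem m1 m2 n1 n2 h _ _ (by omega) (by omega) (by omega) (by omega)
            (by omega) (by omega)
        · rcases Int.even_or_odd (t - (m2 + n2)) with ⟨k, hk⟩ | ⟨k, hk⟩
          · exact ⟨(m2 + n2, k, 0),
              B_mem m1 m2 n1 n2 h _ _ (by omega) (by omega) (by omega) (by omega)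
                (by omega) (by omega),
              by show m2 + n2 + 2 * k = t; omega⟩
          · exact ⟨(m2 + n2 - 1, k + 1, 0),
              B_mem m1 m2 n1 n2 h _ _ (by omega) (by omega) (by omega) (by omega)
                (by omega) (by omega),
              by show m2 + n2 - 1 + 2 * (k + 1) = t; omega⟩
  have h4 : ((S2set m1 m2 n1 n2) \ Tmap '' S2set m1 (m2 - 1) n1 (n2 - 1)).ncard =
      (Set.Icc (0:ℤ) K).ncard := by
    rw [← h3.image_eq, Set.ncard_image_of_injOn h3.injOn]
  have h5 : ((Set.Icc (0:ℤ) K).ncard : ℤ) = K + 1 := by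
    rw [← Finset.coe_Icc, Set.ncard_coe_finset, Int.card_Icc]
    omega
  have h6 := h1
  rw [h2, h4] at h6
  have h7 : ((S2set m1 m2 n1 n2).ncard : ℤ) =
      ((Set.Icc (0:ℤ) K).ncard : ℤ) + ((S2set m1 (m2 - 1) n1 (n2 - 1)).ncard : ℤ) := by
    rw [← h6]; push_cast; ring
  rw [h7, h5]
  ring
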